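/- arXiv:2311.04204 — 2 statements merged into one kernel-verified Lean document; each statement's English description precedes it below -/
import Mathlib

section
/- Consider the planted k-clique model with edge probability p such that binom(n,k)·p^{binom(k,2)} ≥ 100. Then for the planted graph Y, the probability that Y contains exactly one k-clique (namely the planted one) is at most 0.01. Consequently, no estimator can exactly recover the planted clique with probability greater than 0.01 plus the probability that Y contains more than one k-clique under the posterior-ambiguity argument; in particular exact recovery with probability ≥ 0.9 is impossible. -/
open Finset Filter

/-- Potential edges of a graph on `n` labeled vertices. -/
abbrev EdgeType (n : ℕ) := {e : Sym2 (Fin n) // ¬ e.IsDiag}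

open scoped Classical in
/-- Probability of event `A` under the product Bernoulli(p) measure on `α → Bool`. -/
noncomputable def Prw {α : Type*} [Fintype α] [DecidableEq α] (p : ℝ)
    (A : (α → Bool) → Prop) : ℝ :=
  ∑ x : α → Bool, if A x then (∏ i, if x i then p else 1 - p) else 0

open scoped Classical in
/-- The number of `k`-cliques of the graph `y`. -/
noncomputable def cliqueCount (n k : ℕ) (y : EdgeType n → Bool) : ℕ :=
  (Finset.univ.filter (fun T : Finset (Fin n) => T.card = k ∧
    ∀ e : EdgeType n, (∀ v ∈ e.1, v ∈ T) → y e = true)).card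

open scoped Classical in
/-- The graph obtained by planting a clique on `S` on top of the noise graph `x`. -/
noncomputable def plantGraph (n : ℕ) (S : Finset (Fin n)) (x : EdgeType n → Bool) :
    EdgeType n → Bool :=
  fun e => if ∀ v ∈ e.1, v ∈ S then true else x e

/-! ### Auxiliary lemmas -/

lemma sumW {α : Type*} [Fintype α] [DecidableEq α] (p : ℝ) :
    ∑ x : α → Bool, ∏ i, (if x i then p else 1 - p) = 1 := by
  classical
  have h := Finset.prod_univ_sum (fun _ : α => (Finset.univ : Finset Bool))
      (fun _ b => if b then p else 1 - p)
  rw [Fintype.piFinset_univ] at h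
  rw [← h]
  simp

lemma Wnonneg {α : Type*} [Fintype α] {p : ℝ} (hp : 0 ≤ p) (hp1 : p ≤ 1) (x : α → Bool) :
    0 ≤ ∏ i, (if x i then p else 1 - p) :=
  Finset.prod_nonneg fun i _ => by split <;> linarith

open scoped Classical in
lemma Prw_nonneg {α : Type*} [Fintype α] [DecidableEq α] {p : ℝ} (hp : 0 ≤ p) (hp1 : p ≤ 1)
    (A : (α → Bool) → Prop) : 0 ≤ Prw p A := by
  refine Finset.sum_nonneg fun x _ => ?_
  split
  · exact Wnonneg hp hp1 x
  · exact le_refl 0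

open scoped Classical in
lemma push {α : Type*} [Fintype α] [DecidableEq α] (P : α → Prop) [DecidablePred P] (p : ℝ)
    (B : (α → Bool) → Prop) :
    (∑ y : α → Bool, if (B y ∧ ∀ i, P i → y i = true) then (∏ i, if y i then p else 1 - p) else 0)
      = p ^ (Fintype.card {i // P i}) *
        ∑ x : α → Bool, if B (fun i => if P i then true else x i) then (∏ i, if x i then p else 1 - p) else 0 := by
  classical
  set E := Equiv.piEquivPiSubtypeProd P (fun _ : α => Bool) with hE
  have hsum : ∀ (f : (α → Bool) → ℝ), ∑ x : α → Bool, f x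
      = ∑ a : {i // P i} → Bool, ∑ b : {i // ¬ P i} → Bool, f (E.symm (a, b)) := by
    intro f
    rw [← E.symm.sum_comp f, Fintype.sum_prod_type]
  have hEs : ∀ (a : {i // P i} → Bool) (b : {i // ¬ P i} → Bool) (i : α),
      (E.symm (a, b)) i = if h : P i then a ⟨i, h⟩ else b ⟨i, h⟩ := by
    intro a b i
    simp [hE, Equiv.piEquivPiSubtypeProd_symm_apply]
  have hplant : ∀ a b, (fun i => if P i then true else (E.symm (a, b)) i)
      = E.symm (fun _ => true, b) := by
    intro a b; funext i; by_cases h : P i <;> simp [hEs, h]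
  have hW : ∀ (x : α → Bool), (∏ i, if x i then p else 1 - p)
      = (∏ i : {i // P i}, if x i then p else 1 - p) *
        ∏ i : {i // ¬ P i}, if x i then p else 1 - p :=
    fun x => (Fintype.prod_subtype_mul_prod_subtype P fun i => if x i then p else 1 - p).symm
  have hWa : ∀ (a : {i // P i} → Bool) b,
      (∏ i : {i // P i}, if (E.symm (a, b)) i then p else 1 - p)
      = ∏ i : {i // P i}, if a i then p else 1 - p := by
    intro a b
    refine Finset.prod_congr rfl fun i _ => ?_
    rw [hEs]; rw [dif_pos i.2]
  have hWb : ∀ a (b : {i // ¬ P i} → Bool),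
      (∏ i : {i // ¬ P i}, if (E.symm (a, b)) i then p else 1 - p)
      = ∏ i : {i // ¬ P i}, if b i then p else 1 - p := by
    intro a b
    refine Finset.prod_congr rfl fun i _ => ?_
    rw [hEs]; rw [dif_neg i.2]
  have hcond : ∀ a b, (∀ i, P i → (E.symm (a, b)) i = true) ↔ a = fun _ => true := by
    intro a b
    constructor
    · intro h; funext i
      have := h i i.2
      rwa [hEs, dif_pos i.2] at this
    · intro h i hi; rw [hEs, dif_pos hi, h]
  rw [hsum, hsum (fun x => if B (fun i => if P i then true else x i)
      then (∏ i, if x i then p else 1 - p) else 0)]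
  have lhs_eq : ∀ (a : {i // P i} → Bool) (b : {i // ¬ P i} → Bool),
      (if (B (E.symm (a, b)) ∧ ∀ i, P i → (E.symm (a, b)) i = true)
        then (∏ i, if (E.symm (a, b)) i then p else 1 - p) else 0)
      = if a = (fun _ => true) then
          (if B (E.symm ((fun _ => true), b)) then
            p ^ (Fintype.card {i // P i}) * ∏ i : {i // ¬ P i}, (if b i then p else 1 - p)
          else 0)
        else 0 := by
    intro a b
    by_cases ha : a = fun _ => true
    · subst ha
      rw [if_pos rfl]
      have hc : (∀ i, P i → (E.symm ((fun _ => true), b)) i = true) := (hcond _ b).mpr rfl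
      by_cases hb : B (E.symm ((fun _ => true), b))
      · rw [if_pos ⟨hb, hc⟩, if_pos hb, hW, hWa, hWb]
        simp [Finset.prod_const, Finset.card_univ]
      · rw [if_neg (fun h => hb h.1), if_neg hb]
    · rw [if_neg ha, if_neg (by rw [hcond]; tauto)]
  calc (∑ a : {i // P i} → Bool, ∑ b : {i // ¬ P i} → Bool,
        if (B (E.symm (a, b)) ∧ ∀ i, P i → (E.symm (a, b)) i = true)
          then (∏ i, if (E.symm (a, b)) i then p else 1 - p) else 0)
      = ∑ b : {i // ¬ P i} → Bool, ∑ a : {i // P i} → Bool,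
          if a = (fun _ => true) then
            (if B (E.symm ((fun _ => true), b)) then
              p ^ (Fintype.card {i // P i}) * ∏ i : {i // ¬ P i}, (if b i then p else 1 - p)
            else 0)
          else 0 := by
        rw [Finset.sum_comm]
        exact Finset.sum_congr rfl fun b _ => Finset.sum_congr rfl fun a _ => lhs_eq a b
    _ = ∑ b : {i // ¬ P i} → Bool,
          if B (E.symm ((fun _ => true), b)) then
            p ^ (Fintype.card {i // P i}) * ∏ i : {i // ¬ P i}, (if b i then p else 1 - p)
          else 0 := by
        refine Finset.sum_congr rfl fun b _ => ?_
        rw [Finset.sum_ite_eq' Finset.univ (fun _ => true)]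
        simp
    _ = p ^ (Fintype.card {i // P i}) * ∑ b : {i // ¬ P i} → Bool,
          if B (E.symm ((fun _ => true), b)) then
            (∏ i : {i // ¬ P i}, if b i then p else 1 - p) else 0 := by
        rw [Finset.mul_sum]
        refine Finset.sum_congr rfl fun b _ => ?_
        split <;> simp
    _ = p ^ (Fintype.card {i // P i}) *
        ∑ a : {i // P i} → Bool, ∑ b : {i // ¬ P i} → Bool,
          if B (fun i => if P i then true else (E.symm (a, b)) i)
            then (∏ i, if (E.symm (a, b)) i then p else 1 - p) else 0 := by
        congr 1
        rw [Finset.sum_comm]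
        refine Finset.sum_congr rfl fun b _ => ?_
        have : ∀ (a : {i // P i} → Bool),
            (if B (fun i => if P i then true else (E.symm (a, b)) i)
              then (∏ i, if (E.symm (a, b)) i then p else 1 - p) else 0)
            = (if B (E.symm ((fun _ => true), b)) then (1:ℝ) else 0) *
              ((∏ i : {i // P i}, if a i then p else 1 - p) *
               ∏ i : {i // ¬ P i}, if b i then p else 1 - p) := by
          intro a
          rw [hplant, hW, hWa, hWb]
          split <;> simp
        simp only [this]
        rw [← Finset.mul_sum, ← Finset.sum_mul, sumW]
        split <;> simp

open scoped Classical in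
lemma card_edges (n k : ℕ) (S : Finset (Fin n)) (hS : S.card = k)
    {inst : Fintype {e : EdgeType n // ∀ v ∈ e.1, v ∈ S}} :
    @Fintype.card _ inst = k.choose 2 := by
  classical
  have hdiag : ∀ (z : Sym2 {v : Fin n // v ∈ S}), (z.map Subtype.val).IsDiag ↔ z.IsDiag := by
    intro z
    induction z using Sym2.ind with
    | _ x y =>
      rw [Sym2.map_pair_eq, Sym2.mk_isDiag_iff, Sym2.mk_isDiag_iff]
      exact Subtype.ext_iff.symm
  have e1 : {e : Sym2 {v : Fin n // v ∈ S} // ¬ e.IsDiag} ≃ {e : EdgeType n // ∀ v ∈ e.1, v ∈ S} := by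
    refine Equiv.ofBijective
      (fun e => ⟨⟨e.1.map Subtype.val, by rw [hdiag]; exact e.2⟩, ?_⟩) ⟨?_, ?_⟩
    · intro v hv
      rw [Sym2.mem_map] at hv
      obtain ⟨u, _, rfl⟩ := hv
      exact u.2
    · intro e₁ e₂ h
      apply Subtype.ext
      apply Sym2.map.injective Subtype.val_injective
      exact congrArg (fun w => w.1.1) h
    · rintro ⟨⟨z, hd⟩, hmem⟩
      revert hd hmem
      induction z using Sym2.ind with
      | _ x y =>
        intro hd hmem
        have hx : x ∈ S := hmem x (by simp)
        have hy : y ∈ S := hmem y (by simp)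
        have hxy : x ≠ y := by rwa [Sym2.mk_isDiag_iff] at hd
        refine ⟨⟨s(⟨x, hx⟩, ⟨y, hy⟩), by simp [Sym2.mk_isDiag_iff, Subtype.ext_iff, hxy]⟩, ?_⟩
        apply Subtype.ext; apply Subtype.ext
        simp [Sym2.map_pair_eq]
  rw [← Fintype.card_congr e1, Sym2.card_subtype_not_diag]
  congr 1
  rw [Fintype.card_coe, hS]

lemma sum_ite_card {β : Type*} (F : Finset β) (Q : β → Prop) [DecidablePred Q] (c : ℝ) :
    ∑ S ∈ F, (if Q S then c else 0) = ((F.filter Q).card : ℝ) * c := by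
  rw [← Finset.sum_filter, Finset.sum_const, nsmul_eq_mul]

open scoped Classical in
lemma key_bound (n k : ℕ) (p : ℝ) (hp : 0 < p) (hp1 : p < 1)
    (B : Finset (Fin n) → (EdgeType n → Bool) → Prop)
    (hB : ∀ (y : EdgeType n → Bool) (S₁ S₂ : Finset (Fin n)),
      S₁.card = k → B S₁ y → (∀ e : EdgeType n, (∀ v ∈ e.1, v ∈ S₁) → y e = true) →
      S₂.card = k → B S₂ y → (∀ e : EdgeType n, (∀ v ∈ e.1, v ∈ S₂) → y e = true) →
      S₁ = S₂) :
    ∑ S ∈ ((Finset.univ : Finset (Finset (Fin n))).filter fun S : Finset (Fin n) => S.card = k),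
      p ^ k.choose 2 * Prw p (fun x => B S (plantGraph n S x)) ≤ 1 := by
  classical
  have hB' : ∀ y : EdgeType n → Bool,
      ((Finset.univ : Finset (Finset (Fin n))).filter fun S => S.card = k ∧ B S y ∧
        ∀ e : EdgeType n, (∀ v ∈ e.1, v ∈ S) → y e = true).card ≤ 1 := by
    intro y
    refine Finset.card_le_one.mpr fun a ha b hb => ?_
    rw [Finset.mem_filter] at ha hb
    exact hB y a b ha.2.1 ha.2.2.1 ha.2.2.2 hb.2.1 hb.2.2.1 hb.2.2.2
  have step1 : ∀ S ∈ ((Finset.univ : Finset (Finset (Fin n))).filter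
        fun S : Finset (Fin n) => S.card = k),
      p ^ k.choose 2 * Prw p (fun x => B S (plantGraph n S x))
      = Prw p (fun y => B S y ∧ ∀ e : EdgeType n, (∀ v ∈ e.1, v ∈ S) → y e = true) := by
    intro S hs
    rw [Finset.mem_filter] at hs
    have h := push (α := EdgeType n) (fun e => ∀ v ∈ e.1, v ∈ S) p (B S)
    rw [card_edges n k S hs.2] at h
    unfold Prw plantGraph
    convert h.symm using 2 <;> congr! 1
  rw [Finset.sum_congr rfl step1]
  have expand : ∑ S ∈ ((Finset.univ : Finset (Finset (Fin n))).filter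
        fun S : Finset (Fin n) => S.card = k),
      Prw p (fun y => B S y ∧ ∀ e : EdgeType n, (∀ v ∈ e.1, v ∈ S) → y e = true)
      = ∑ y : EdgeType n → Bool,
        ((((Finset.univ : Finset (Finset (Fin n))).filter fun S => S.card = k ∧ B S y ∧
            ∀ e : EdgeType n, (∀ v ∈ e.1, v ∈ S) → y e = true).card : ℝ)) *
          ∏ e, (if y e then p else 1 - p) := by
    simp only [Prw]
    rw [Finset.sum_comm]
    refine Finset.sum_congr rfl fun y _ => ?_
    have h2 := sum_ite_card ((Finset.univ : Finset (Finset (Fin n))).filter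
        fun S : Finset (Fin n) => S.card = k)
      (fun S => B S y ∧ ∀ e : EdgeType n, (∀ v ∈ e.1, v ∈ S) → y e = true)
      (∏ e, if y e then p else 1 - p)
    rw [Finset.filter_filter] at h2
    convert h2 using 2 <;> congr!
  rw [expand]
  calc ∑ y : EdgeType n → Bool,
        ((((Finset.univ : Finset (Finset (Fin n))).filter fun S => S.card = k ∧ B S y ∧
            ∀ e : EdgeType n, (∀ v ∈ e.1, v ∈ S) → y e = true).card : ℝ)) *
          ∏ e, (if y e then p else 1 - p)
      ≤ ∑ y : EdgeType n → Bool, 1 * ∏ e, (if y e then p else 1 - p) := by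
        refine Finset.sum_le_sum fun y _ => ?_
        refine mul_le_mul_of_nonneg_right ?_ (Wnonneg hp.le hp1.le y)
        exact_mod_cast hB' y
    _ = 1 := by
        simp only [one_mul]
        exact sumW p

open scoped Classical in
lemma final_bound (n k : ℕ) (hkn : k ≤ n) (p : ℝ) (hp : 0 < p) (hp1 : p < 1)
    (hbig : (100 : ℝ) ≤ (n.choose k : ℝ) * p ^ (k.choose 2))
    (B : Finset (Fin n) → (EdgeType n → Bool) → Prop)
    (hB : ∀ (y : EdgeType n → Bool) (S₁ S₂ : Finset (Fin n)),
      S₁.card = k → B S₁ y → (∀ e : EdgeType n, (∀ v ∈ e.1, v ∈ S₁) → y e = true) →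
      S₂.card = k → B S₂ y → (∀ e : EdgeType n, (∀ v ∈ e.1, v ∈ S₂) → y e = true) →
      S₁ = S₂) :
    ((n.choose k : ℝ))⁻¹ *
      (∑ S ∈ Finset.univ.filter (fun S : Finset (Fin n) => S.card = k),
        Prw p (fun x : EdgeType n → Bool => B S (plantGraph n S x))) ≤ 0.01 := by
  classical
  have hq : (0:ℝ) < p ^ k.choose 2 := pow_pos hp _
  have hc : (0:ℝ) < (n.choose k : ℝ) := by exact_mod_cast Nat.choose_pos hkn
  have hkey := key_bound n k p hp hp1 B hB
  rw [← Finset.mul_sum] at hkey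
  set s := ∑ S ∈ Finset.univ.filter (fun S : Finset (Fin n) => S.card = k),
      Prw p (fun x : EdgeType n → Bool => B S (plantGraph n S x)) with hs
  have hS0 : 0 ≤ s :=
    Finset.sum_nonneg fun S _ => Prw_nonneg hp.le hp1.le _
  have h1 : (n.choose k : ℝ) * (p ^ k.choose 2 * s) ≤ (n.choose k : ℝ) * 1 :=
    mul_le_mul_of_nonneg_left hkey hc.le
  have h2 : 100 * s ≤ ((n.choose k : ℝ) * p ^ k.choose 2) * s :=
    mul_le_mul_of_nonneg_right hbig hS0
  rw [mul_assoc] at h2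
  have h100 : 100 * s ≤ (n.choose k : ℝ) := by linarith
  calc ((n.choose k : ℝ))⁻¹ * s ≤ ((n.choose k : ℝ))⁻¹ * (0.01 * (n.choose k : ℝ)) := by
        apply mul_le_mul_of_nonneg_left (by linarith) (by positivity)
    _ = 0.01 := by field_simp

open scoped Classical in
/-- If `C(n,k)·p^{C(k,2)} ≥ 100`, then in the planted `k`-clique model the probability
that the observed graph contains exactly one `k`-clique is at most `0.01`; consequently
no estimator exactly recovers the planted clique with probability `≥ 0.9`. -/
theorem planted_clique_nothing (n k : ℕ) (hk : 2 ≤ k) (hkn : k ≤ n)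
    (p : ℝ) (hp : 0 < p) (hp1 : p < 1)
    (hbig : (100 : ℝ) ≤ (n.choose k : ℝ) * p ^ (k.choose 2)) :
    ((n.choose k : ℝ))⁻¹ *
      (∑ S ∈ Finset.univ.filter (fun S : Finset (Fin n) => S.card = k),
        Prw p (fun x : EdgeType n → Bool => cliqueCount n k (plantGraph n S x) = 1))
      ≤ 0.01 ∧
    ∀ A : (EdgeType n → Bool) → Finset (Fin n),
      ((n.choose k : ℝ))⁻¹ *
        (∑ S ∈ Finset.univ.filter (fun S : Finset (Fin n) => S.card = k),
          Prw p (fun x : EdgeType n → Bool => A (plantGraph n S x) = S))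
        < 0.9 := by
  classical
  constructor
  · refine final_bound n k hkn p hp hp1 hbig (fun _ y => cliqueCount n k y = 1) ?_
    intro y S₁ S₂ hc₁ hZ hq₁ hc₂ _ hq₂
    unfold cliqueCount at hZ
    exact Finset.card_le_one.mp (le_of_eq hZ) S₁
      (Finset.mem_filter.mpr ⟨Finset.mem_univ _, hc₁, hq₁⟩) S₂
      (Finset.mem_filter.mpr ⟨Finset.mem_univ _, hc₂, hq₂⟩)
  · intro A
    have hb := final_bound n k hkn p hp hp1 hbig (fun S y => A y = S) ?_
    · exact lt_of_le_of_lt hb (by norm_num)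
    · intro y S₁ S₂ _ h₁ _ _ h₂ _
      exact h₁.symm.trans h₂
end

section
/- Let ℓ, k, n ∈ ℕ with 1 ≤ ℓ ≤ (1−δ')k for some constant δ' ∈ (0,1), and k = o(n). Then binom(k,ℓ)·binom(n−k, k−ℓ)·binom(n,k)^{−1} ≤ (e·k²/(ℓ(n−2k)))^ℓ for large enough n, and binom(n,k)^{ℓ²/k²} ≤ (ne/k)^{ℓ²/k}. Consequently, the ℓ-th term in the planted-clique first-moment bound satisfies binom(k,ℓ)·binom(n−k,k−ℓ)·binom(n,k)^{−1+ℓ²/k²} ≤ F(ℓ)^ℓ where F(ℓ) := e²·(k²/(ℓ(n−2k)))·(n/k)^{ℓ/k}, and ℓ ↦ log F(ℓ) is convex on [1, (1−δ')k], so max_{1≤ℓ≤(1−δ')k} F(ℓ) ≤ max{F(1), F((1−δ')k)}. -/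
open Finset Filter

lemma aux_pow_div_factorial (m : ℕ) : (m : ℝ) ^ m / m.factorial ≤ Real.exp m := by
  refine le_trans ?_ (Real.sum_le_exp_of_nonneg (x := (m : ℝ)) (by positivity) (m + 1))
  exact Finset.single_le_sum (f := fun i => (m : ℝ) ^ i / i.factorial)
    (fun i _ => by positivity) (Finset.self_mem_range_succ m)

lemma aux_choose_le (n ℓ : ℕ) (hℓ : 1 ≤ ℓ) :
    (n.choose ℓ : ℝ) ≤ (Real.exp 1 * n / ℓ) ^ ℓ := by
  have h1 : (n.choose ℓ : ℝ) ≤ (n : ℝ) ^ ℓ / ℓ.factorial := by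
    have := Nat.choose_le_pow_div (α := ℝ) ℓ n
    push_cast at this ⊢
    exact this
  refine h1.trans ?_
  have hl0 : (0:ℝ) < ℓ := by exact_mod_cast hℓ
  have hf : (0:ℝ) < ℓ.factorial := by positivity
  have hfac : (ℓ : ℝ) ^ ℓ ≤ Real.exp ℓ * ℓ.factorial := by
    have h := aux_pow_div_factorial ℓ
    calc (ℓ : ℝ) ^ ℓ = (ℓ : ℝ) ^ ℓ / ℓ.factorial * ℓ.factorial := by field_simp
      _ ≤ Real.exp ℓ * ℓ.factorial := mul_le_mul_of_nonneg_right h hf.le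
  rw [div_pow, div_le_div_iff₀ hf (by positivity)]
  calc (n : ℝ) ^ ℓ * (ℓ : ℝ) ^ ℓ ≤ (n : ℝ) ^ ℓ * (Real.exp ℓ * ℓ.factorial) :=
        mul_le_mul_of_nonneg_left hfac (by positivity)
    _ = (Real.exp 1 * n) ^ ℓ * ℓ.factorial := by
        rw [mul_pow, ← Real.exp_one_pow]; ring

lemma aux_ratio (n k : ℕ) (h2k : 2 * k < n) :
    ∀ ℓ : ℕ, ℓ ≤ k →
      (n.choose (k - ℓ) : ℝ) * ((n : ℝ) - 2 * k) ^ ℓ ≤ (k : ℝ) ^ ℓ * n.choose k := by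
  intro ℓ
  induction ℓ with
  | zero => intro _; simp
  | succ ℓ ih =>
    intro hℓ
    have hn2k : (0:ℝ) ≤ (n : ℝ) - 2 * k := by
      have : (2 * k : ℕ) ≤ n := h2k.le
      have : ((2 * k : ℕ) : ℝ) ≤ n := by exact_mod_cast this
      push_cast at this; linarith
    set m := k - (ℓ + 1) with hm
    have hms : m + 1 = k - ℓ := by omega
    have hmn : m ≤ n := by omega
    have hid : (n.choose (m + 1) : ℝ) * (m + 1) = (n.choose m : ℝ) * ((n : ℝ) - m) := by
      have h := Nat.choose_succ_right_eq n m
      have h' : ((n.choose (m + 1) * (m + 1) : ℕ) : ℝ) = ((n.choose m * (n - m) : ℕ) : ℝ) := by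
        rw [h]
      push_cast [Nat.cast_sub hmn] at h'
      linarith [h']
    have key : (n.choose m : ℝ) * ((n : ℝ) - 2 * k) ≤ (k : ℝ) * n.choose (m + 1) := by
      have hmltn : (m : ℝ) < n := by exact_mod_cast (by omega : m < n)
      have hnm : (0:ℝ) < (n : ℝ) - m := by linarith
      have e2 : ((m : ℝ) + 1) * ((n : ℝ) - 2 * k) ≤ (k : ℝ) * ((n : ℝ) - m) := by
        have hm1k : (m : ℝ) + 1 ≤ k := by exact_mod_cast (by omega : m + 1 ≤ k)
        have hm2k : (m : ℝ) ≤ 2 * k := by exact_mod_cast (by omega : m ≤ 2 * k)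
        have : (n : ℝ) - 2 * k ≤ (n : ℝ) - m := by linarith
        exact mul_le_mul hm1k this hn2k (by positivity)
      have h1 : (n.choose m : ℝ) * ((n : ℝ) - 2 * k) * ((n : ℝ) - m)
          ≤ (k : ℝ) * (n.choose (m + 1) : ℝ) * ((n : ℝ) - m) := by
        calc (n.choose m : ℝ) * ((n : ℝ) - 2 * k) * ((n : ℝ) - m)
            = (n.choose (m + 1) : ℝ) * (((m : ℝ) + 1) * ((n : ℝ) - 2 * k)) := by
              push_cast at hid ⊢; nlinarith [hid]
          _ ≤ (n.choose (m + 1) : ℝ) * ((k : ℝ) * ((n : ℝ) - m)) :=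
              mul_le_mul_of_nonneg_left e2 (by positivity)
          _ = (k : ℝ) * (n.choose (m + 1) : ℝ) * ((n : ℝ) - m) := by ring
      exact le_of_mul_le_mul_right h1 hnm
    calc (n.choose (k - (ℓ + 1)) : ℝ) * ((n : ℝ) - 2 * k) ^ (ℓ + 1)
        = ((n.choose m : ℝ) * ((n : ℝ) - 2 * k)) * ((n : ℝ) - 2 * k) ^ ℓ := by
          rw [← hm, pow_succ]; ring
      _ ≤ ((k : ℝ) * n.choose (m + 1)) * ((n : ℝ) - 2 * k) ^ ℓ :=
          mul_le_mul_of_nonneg_right key (pow_nonneg hn2k ℓ)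
      _ = (k : ℝ) * ((n.choose (k - ℓ) : ℝ) * ((n : ℝ) - 2 * k) ^ ℓ) := by rw [hms]; ring
      _ ≤ (k : ℝ) * ((k : ℝ) ^ ℓ * n.choose k) :=
          mul_le_mul_of_nonneg_left (ih (by omega)) (by positivity)
      _ = (k : ℝ) ^ (ℓ + 1) * n.choose k := by ring

lemma part1_aux (n kn ℓ : ℕ) (hk1 : 1 ≤ kn) (h4 : 4 * kn < n) (hℓ1 : 1 ≤ ℓ) (hℓk : ℓ ≤ kn) :
    (kn.choose ℓ : ℝ) * ((n - kn).choose (kn - ℓ) : ℝ) / (n.choose kn : ℝ)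
      ≤ (Real.exp 1 * (kn : ℝ) ^ 2 / (ℓ * ((n : ℝ) - 2 * kn))) ^ ℓ := by
  have h2k : 2 * kn < n := by omega
  have hkn : kn ≤ n := by omega
  have hn2k : (0:ℝ) < (n : ℝ) - 2 * kn := by
    have : ((2 * kn : ℕ) : ℝ) < n := by exact_mod_cast h2k
    push_cast at this; linarith
  have hl0 : (0:ℝ) < ℓ := by exact_mod_cast hℓ1
  have hC : (0:ℝ) < n.choose kn := by exact_mod_cast Nat.choose_pos hkn
  have hB : ((n - kn).choose (kn - ℓ) : ℝ) ≤ (n.choose (kn - ℓ) : ℝ) := by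
    exact_mod_cast Nat.choose_le_choose (kn - ℓ) (Nat.sub_le n kn)
  have hr := aux_ratio n kn h2k ℓ hℓk
  have hA := aux_choose_le kn ℓ hℓ1
  have hRHS : (Real.exp 1 * (kn : ℝ) ^ 2 / (ℓ * ((n : ℝ) - 2 * kn))) ^ ℓ
      = (Real.exp 1 * kn / ℓ) ^ ℓ * ((kn : ℝ) / ((n : ℝ) - 2 * kn)) ^ ℓ := by
    rw [← mul_pow]; congr 1; field_simp
  rw [hRHS, div_le_iff₀ hC]
  calc (kn.choose ℓ : ℝ) * ((n - kn).choose (kn - ℓ) : ℝ)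
      ≤ (Real.exp 1 * kn / ℓ) ^ ℓ * (n.choose (kn - ℓ) : ℝ) :=
        mul_le_mul hA hB (by positivity) (by positivity)
    _ ≤ (Real.exp 1 * kn / ℓ) ^ ℓ * ((kn : ℝ) ^ ℓ * (n.choose kn : ℝ) / ((n : ℝ) - 2 * kn) ^ ℓ) := by
        refine mul_le_mul_of_nonneg_left ?_ (by positivity)
        rw [le_div_iff₀ (pow_pos hn2k ℓ)]
        linarith [hr]
    _ = (Real.exp 1 * kn / ℓ) ^ ℓ * ((kn : ℝ) / ((n : ℝ) - 2 * kn)) ^ ℓ * (n.choose kn : ℝ) := by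
        rw [div_pow]; ring

lemma part2_aux (n kn ℓ : ℕ) (hk1 : 1 ≤ kn) (h4 : 4 * kn < n) (hℓ1 : 1 ≤ ℓ) (hℓk : ℓ ≤ kn) :
    (n.choose kn : ℝ) ^ ((ℓ : ℝ) ^ 2 / (kn : ℝ) ^ 2)
      ≤ ((n : ℝ) * Real.exp 1 / (kn : ℝ)) ^ ((ℓ : ℝ) ^ 2 / (kn : ℝ)) := by
  have hkn : kn ≤ n := by omega
  have hk0 : (0:ℝ) < kn := by exact_mod_cast hk1
  have hb : (n.choose kn : ℝ) ≤ ((n : ℝ) * Real.exp 1 / kn) ^ kn := by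
    have := aux_choose_le n kn hk1
    rw [mul_comm (Real.exp 1) (n : ℝ)] at this
    exact this
  have hs : (0:ℝ) ≤ (ℓ : ℝ) ^ 2 / (kn : ℝ) ^ 2 := by positivity
  calc (n.choose kn : ℝ) ^ ((ℓ : ℝ) ^ 2 / (kn : ℝ) ^ 2)
      ≤ (((n : ℝ) * Real.exp 1 / kn) ^ kn) ^ ((ℓ : ℝ) ^ 2 / (kn : ℝ) ^ 2) :=
        Real.rpow_le_rpow (by positivity) hb hs
    _ = ((n : ℝ) * Real.exp 1 / kn) ^ ((kn : ℝ) * ((ℓ : ℝ) ^ 2 / (kn : ℝ) ^ 2)) := by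
        rw [← Real.rpow_natCast ((n : ℝ) * Real.exp 1 / kn) kn,
          ← Real.rpow_mul (by positivity)]
    _ = ((n : ℝ) * Real.exp 1 / kn) ^ ((ℓ : ℝ) ^ 2 / (kn : ℝ)) := by
        congr 1; field_simp

lemma part3_aux (n kn ℓ : ℕ) (hk1 : 1 ≤ kn) (h4 : 4 * kn < n) (hℓ1 : 1 ≤ ℓ) (hℓk : ℓ ≤ kn) :
    (kn.choose ℓ : ℝ) * ((n - kn).choose (kn - ℓ) : ℝ) *
        (n.choose kn : ℝ) ^ (-(1 : ℝ) + (ℓ : ℝ) ^ 2 / (kn : ℝ) ^ 2)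
      ≤ (Real.exp 2 * (kn : ℝ) ^ 2 / (ℓ * ((n : ℝ) - 2 * kn)) *
          ((n : ℝ) / (kn : ℝ)) ^ ((ℓ : ℝ) / (kn : ℝ))) ^ ℓ := by
  have hkn : kn ≤ n := by omega
  have hk0 : (0:ℝ) < kn := by exact_mod_cast hk1
  have hl0 : (0:ℝ) < ℓ := by exact_mod_cast hℓ1
  have hn2k : (0:ℝ) < (n : ℝ) - 2 * kn := by
    have : ((2 * kn : ℕ) : ℝ) < n := by exact_mod_cast (by omega : 2 * kn < n)
    push_cast at this; linarith
  have hC : (0:ℝ) < n.choose kn := by exact_mod_cast Nat.choose_pos hkn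
  set P : ℝ := Real.exp 1 * (kn : ℝ) ^ 2 / (ℓ * ((n : ℝ) - 2 * kn)) with hP
  have hPpos : 0 < P := by rw [hP]; positivity
  have hnk : (0:ℝ) ≤ (n : ℝ) / kn := by positivity
  have hsplit : (n.choose kn : ℝ) ^ (-(1 : ℝ) + (ℓ : ℝ) ^ 2 / (kn : ℝ) ^ 2)
      = (n.choose kn : ℝ)⁻¹ * (n.choose kn : ℝ) ^ ((ℓ : ℝ) ^ 2 / (kn : ℝ) ^ 2) := by
    rw [Real.rpow_add hC, Real.rpow_neg_one]
  have step1 := part1_aux n kn ℓ hk1 h4 hℓ1 hℓk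
  have step2 := part2_aux n kn ℓ hk1 h4 hℓ1 hℓk
  have hLHS : (kn.choose ℓ : ℝ) * ((n - kn).choose (kn - ℓ) : ℝ) *
        (n.choose kn : ℝ) ^ (-(1 : ℝ) + (ℓ : ℝ) ^ 2 / (kn : ℝ) ^ 2)
      ≤ P ^ ℓ * ((n : ℝ) * Real.exp 1 / kn) ^ ((ℓ : ℝ) ^ 2 / (kn : ℝ)) := by
    rw [hsplit]
    have : (kn.choose ℓ : ℝ) * ((n - kn).choose (kn - ℓ) : ℝ) * ((n.choose kn : ℝ)⁻¹ *
        (n.choose kn : ℝ) ^ ((ℓ : ℝ) ^ 2 / (kn : ℝ) ^ 2))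
        = ((kn.choose ℓ : ℝ) * ((n - kn).choose (kn - ℓ) : ℝ) / (n.choose kn : ℝ)) *
          (n.choose kn : ℝ) ^ ((ℓ : ℝ) ^ 2 / (kn : ℝ) ^ 2) := by
      field_simp
    rw [this]
    exact mul_le_mul step1 step2 (by positivity) (by positivity)
  refine hLHS.trans ?_
  have e1 : ((n : ℝ) * Real.exp 1 / kn) ^ ((ℓ : ℝ) ^ 2 / kn)
      = ((n : ℝ) / kn) ^ ((ℓ : ℝ) ^ 2 / kn) * Real.exp ((ℓ : ℝ) ^ 2 / kn) := by
    rw [show (n : ℝ) * Real.exp 1 / kn = ((n : ℝ) / kn) * Real.exp 1 by ring,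
      Real.mul_rpow hnk (Real.exp_pos 1).le, Real.exp_one_rpow]
  have e2 : Real.exp ((ℓ : ℝ) ^ 2 / kn) ≤ Real.exp ℓ := by
    rw [Real.exp_le_exp, div_le_iff₀ hk0]
    have : (ℓ : ℝ) ≤ kn := by exact_mod_cast hℓk
    nlinarith
  have hRHS : (Real.exp 2 * (kn : ℝ) ^ 2 / (ℓ * ((n : ℝ) - 2 * kn)) *
        ((n : ℝ) / (kn : ℝ)) ^ ((ℓ : ℝ) / (kn : ℝ))) ^ ℓ
      = P ^ ℓ * Real.exp ℓ * ((n : ℝ) / kn) ^ ((ℓ : ℝ) ^ 2 / kn) := by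
    have hexp2 : Real.exp 2 = Real.exp 1 * Real.exp 1 := by
      rw [← Real.exp_add]; norm_num
    have hY : (((n : ℝ) / kn) ^ ((ℓ : ℝ) / kn)) ^ ℓ = ((n : ℝ) / kn) ^ ((ℓ : ℝ) ^ 2 / kn) := by
      rw [← Real.rpow_natCast (((n : ℝ) / kn) ^ ((ℓ : ℝ) / kn)) ℓ, ← Real.rpow_mul hnk]
      congr 1; ring
    calc (Real.exp 2 * (kn : ℝ) ^ 2 / (ℓ * ((n : ℝ) - 2 * kn)) *
          ((n : ℝ) / (kn : ℝ)) ^ ((ℓ : ℝ) / (kn : ℝ))) ^ ℓ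
        = (P * (Real.exp 1 * ((n : ℝ) / kn) ^ ((ℓ : ℝ) / kn))) ^ ℓ := by
          congr 1; rw [hP, hexp2]; ring
      _ = P ^ ℓ * (Real.exp 1) ^ ℓ * (((n : ℝ) / kn) ^ ((ℓ : ℝ) / kn)) ^ ℓ := by
          rw [mul_pow, mul_pow]; ring
      _ = P ^ ℓ * Real.exp ℓ * ((n : ℝ) / kn) ^ ((ℓ : ℝ) ^ 2 / kn) := by
          rw [Real.exp_one_pow, hY]
  rw [hRHS, e1]
  calc P ^ ℓ * (((n : ℝ) / kn) ^ ((ℓ : ℝ) ^ 2 / kn) * Real.exp ((ℓ : ℝ) ^ 2 / kn))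
      ≤ P ^ ℓ * (((n : ℝ) / kn) ^ ((ℓ : ℝ) ^ 2 / kn) * Real.exp ℓ) := by
        refine mul_le_mul_of_nonneg_left (mul_le_mul_of_nonneg_left e2 ?_) (by positivity)
        positivity
    _ = P ^ ℓ * Real.exp ℓ * ((n : ℝ) / kn) ^ ((ℓ : ℝ) ^ 2 / kn) := by ring

lemma part4_aux (n kn : ℕ) (hk1 : 1 ≤ kn) (h4 : 4 * kn < n)
    (δ' : ℝ) (hδ : 0 < δ') (hδ1 : δ' < 1) :
    ConvexOn ℝ (Set.Icc (1 : ℝ) ((1 - δ') * kn))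
        (fun ℓ : ℝ => Real.log (Real.exp 2 * (kn : ℝ) ^ 2 / (ℓ * ((n : ℝ) - 2 * kn)) *
          ((n : ℝ) / (kn : ℝ)) ^ (ℓ / (kn : ℝ)))) ∧
      ∀ ℓ : ℝ, ℓ ∈ Set.Icc (1 : ℝ) ((1 - δ') * kn) →
        Real.exp 2 * (kn : ℝ) ^ 2 / (ℓ * ((n : ℝ) - 2 * kn)) *
            ((n : ℝ) / (kn : ℝ)) ^ (ℓ / (kn : ℝ))
          ≤ max
            (Real.exp 2 * (kn : ℝ) ^ 2 / (1 * ((n : ℝ) - 2 * kn)) *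
              ((n : ℝ) / (kn : ℝ)) ^ ((1 : ℝ) / (kn : ℝ)))
            (Real.exp 2 * (kn : ℝ) ^ 2 / ((1 - δ') * kn * ((n : ℝ) - 2 * kn)) *
              ((n : ℝ) / (kn : ℝ)) ^ ((1 - δ') * kn / (kn : ℝ))) := by
  have hk0 : (0:ℝ) < kn := by exact_mod_cast hk1
  have hn2k : (0:ℝ) < (n : ℝ) - 2 * kn := by
    have : ((2 * kn : ℕ) : ℝ) < n := by exact_mod_cast (by omega : 2 * kn < n)
    push_cast at this; linarith
  have hn0 : (0:ℝ) < n := by exact_mod_cast (by omega : 0 < n)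
  have hNK : (0:ℝ) < (n : ℝ) / kn := by positivity
  set B : ℝ := (1 - δ') * kn with hB
  set F : ℝ → ℝ := fun ℓ : ℝ => Real.exp 2 * (kn : ℝ) ^ 2 / (ℓ * ((n : ℝ) - 2 * kn)) *
          ((n : ℝ) / (kn : ℝ)) ^ (ℓ / (kn : ℝ)) with hF
  set c : ℝ := Real.log ((n : ℝ) / kn) / kn with hc
  set a : ℝ := Real.log (Real.exp 2 * (kn : ℝ) ^ 2 / ((n : ℝ) - 2 * kn)) with ha
  have hsub : Set.Icc (1 : ℝ) B ⊆ Set.Ioi (0 : ℝ) :=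
    fun x hx => lt_of_lt_of_le one_pos hx.1
  have hcnn : 0 ≤ c := by
    rw [hc]
    have h1 : (1:ℝ) ≤ (n : ℝ) / kn := by
      rw [le_div_iff₀ hk0]
      have : ((kn : ℕ) : ℝ) ≤ n := by exact_mod_cast (by omega : kn ≤ n)
      linarith
    have := Real.log_nonneg h1
    positivity
  have hconvh : ConvexOn ℝ (Set.Icc (1 : ℝ) B)
      ((fun _ : ℝ => a) + (fun x : ℝ => -Real.log x) + (fun x : ℝ => c • x)) := by
    refine ConvexOn.add (ConvexOn.add (convexOn_const a (convex_Icc _ _)) ?_) ?_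
    · exact (strictConcaveOn_log_Ioi.concaveOn.neg).subset hsub (convex_Icc _ _)
    · exact (convexOn_id (convex_Icc _ _)).smul hcnn
  have heq : Set.EqOn ((fun _ : ℝ => a) + (fun x : ℝ => -Real.log x) + (fun x : ℝ => c • x))
      (fun ℓ : ℝ => Real.log (F ℓ)) (Set.Icc (1 : ℝ) B) := by
    intro x hx
    have hx0 : (0:ℝ) < x := hsub hx
    simp only [Pi.add_apply, smul_eq_mul, hF]
    rw [show Real.exp 2 * (kn : ℝ) ^ 2 / (x * ((n : ℝ) - 2 * kn))
        = (Real.exp 2 * (kn : ℝ) ^ 2 / ((n : ℝ) - 2 * kn)) / x from by field_simp]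
    rw [Real.log_mul (by positivity) (ne_of_gt (Real.rpow_pos_of_pos hNK _)),
      Real.log_div (by positivity) (ne_of_gt hx0), Real.log_rpow hNK]
    rw [ha, hc]; ring
  have hconv : ConvexOn ℝ (Set.Icc (1 : ℝ) B) (fun ℓ : ℝ => Real.log (F ℓ)) :=
    hconvh.congr heq
  refine ⟨hconv, ?_⟩
  intro ℓ hℓ
  have hB1 : (1:ℝ) ≤ B := le_trans hℓ.1 hℓ.2
  have h1mem : (1:ℝ) ∈ Set.Icc (1 : ℝ) B := ⟨le_refl _, hB1⟩
  have hBmem : B ∈ Set.Icc (1 : ℝ) B := ⟨hB1, le_refl _⟩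
  have hseg : ℓ ∈ segment ℝ (1:ℝ) B := by rw [segment_eq_Icc hB1]; exact hℓ
  have hmax := hconv.le_on_segment h1mem hBmem hseg
  have hFpos : ∀ x : ℝ, 0 < x → 0 < F x := by
    intro x hx
    exact mul_pos (div_pos (by positivity) (mul_pos hx hn2k)) (Real.rpow_pos_of_pos hNK _)
  have hℓ0 : (0:ℝ) < ℓ := lt_of_lt_of_le one_pos hℓ.1
  have hB0 : (0:ℝ) < B := lt_of_lt_of_le one_pos hB1
  have key : F ℓ ≤ max (F 1) (F B) := by
    calc F ℓ = Real.exp (Real.log (F ℓ)) := (Real.exp_log (hFpos ℓ hℓ0)).symm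
      _ ≤ Real.exp (max (Real.log (F 1)) (Real.log (F B))) := Real.exp_le_exp.mpr hmax
      _ = max (Real.exp (Real.log (F 1))) (Real.exp (Real.log (F B))) :=
          Real.exp_monotone.map_max
      _ = max (F 1) (F B) := by
          rw [Real.exp_log (hFpos 1 one_pos), Real.exp_log (hFpos B hB0)]
  have e1 : F 1 = Real.exp 2 * (kn : ℝ) ^ 2 / (1 * ((n : ℝ) - 2 * kn)) *
      ((n : ℝ) / (kn : ℝ)) ^ ((1 : ℝ) / (kn : ℝ)) := rfl
  have e2 : F B = Real.exp 2 * (kn : ℝ) ^ 2 / ((1 - δ') * kn * ((n : ℝ) - 2 * kn)) *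
      ((n : ℝ) / (kn : ℝ)) ^ ((1 - δ') * kn / (kn : ℝ)) := rfl
  rw [← e1, ← e2]
  exact key


/-- Binomial estimates for the planted-clique first moment in the range
`1 ≤ ℓ ≤ (1-δ')k`, `k = o(n)`: bounds on `C(k,ℓ)C(n-k,k-ℓ)/C(n,k)` and
`C(n,k)^{ℓ²/k²}`, the combined bound by `F(ℓ)^ℓ` with
`F(ℓ) = e²·k²/(ℓ(n-2k))·(n/k)^{ℓ/k}`, log-convexity of `F`, and the resulting
endpoint maximum principle. -/
theorem planted_clique_binomial_estimates (k : ℕ → ℕ) (hk1 : ∀ n, 1 ≤ k n)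
    (hko : Tendsto (fun n : ℕ => (k n : ℝ) / n) atTop (nhds 0))
    (δ' : ℝ) (hδ : 0 < δ') (hδ1 : δ' < 1) :
    (∀ᶠ n : ℕ in atTop, ∀ ℓ : ℕ, 1 ≤ ℓ → (ℓ : ℝ) ≤ (1 - δ') * k n →
      ((k n).choose ℓ : ℝ) * ((n - k n).choose (k n - ℓ) : ℝ) / (n.choose (k n) : ℝ)
        ≤ (Real.exp 1 * (k n : ℝ) ^ 2 / (ℓ * ((n : ℝ) - 2 * k n))) ^ ℓ) ∧
    (∀ᶠ n : ℕ in atTop, ∀ ℓ : ℕ, 1 ≤ ℓ → ℓ ≤ k n →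
      (n.choose (k n) : ℝ) ^ ((ℓ : ℝ) ^ 2 / (k n : ℝ) ^ 2)
        ≤ ((n : ℝ) * Real.exp 1 / (k n : ℝ)) ^ ((ℓ : ℝ) ^ 2 / (k n : ℝ))) ∧
    (∀ᶠ n : ℕ in atTop, ∀ ℓ : ℕ, 1 ≤ ℓ → (ℓ : ℝ) ≤ (1 - δ') * k n →
      ((k n).choose ℓ : ℝ) * ((n - k n).choose (k n - ℓ) : ℝ) *
        (n.choose (k n) : ℝ) ^ (-(1 : ℝ) + (ℓ : ℝ) ^ 2 / (k n : ℝ) ^ 2)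
      ≤ (Real.exp 2 * (k n : ℝ) ^ 2 / (ℓ * ((n : ℝ) - 2 * k n)) *
          ((n : ℝ) / (k n : ℝ)) ^ ((ℓ : ℝ) / (k n : ℝ))) ^ ℓ) ∧
    (∀ᶠ n : ℕ in atTop,
      ConvexOn ℝ (Set.Icc (1 : ℝ) ((1 - δ') * k n))
        (fun ℓ : ℝ => Real.log (Real.exp 2 * (k n : ℝ) ^ 2 / (ℓ * ((n : ℝ) - 2 * k n)) *
          ((n : ℝ) / (k n : ℝ)) ^ (ℓ / (k n : ℝ)))) ∧
      ∀ ℓ : ℝ, ℓ ∈ Set.Icc (1 : ℝ) ((1 - δ') * k n) →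
        Real.exp 2 * (k n : ℝ) ^ 2 / (ℓ * ((n : ℝ) - 2 * k n)) *
            ((n : ℝ) / (k n : ℝ)) ^ (ℓ / (k n : ℝ))
          ≤ max
            (Real.exp 2 * (k n : ℝ) ^ 2 / (1 * ((n : ℝ) - 2 * k n)) *
              ((n : ℝ) / (k n : ℝ)) ^ ((1 : ℝ) / (k n : ℝ)))
            (Real.exp 2 * (k n : ℝ) ^ 2 / ((1 - δ') * k n * ((n : ℝ) - 2 * k n)) *
              ((n : ℝ) / (k n : ℝ)) ^ ((1 - δ') * k n / (k n : ℝ)))) := by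
  have h14 : ∀ᶠ n : ℕ in atTop, 4 * k n < n := by
    have h1 : ∀ᶠ n : ℕ in atTop, (k n : ℝ) / n < 1 / 8 :=
      hko.eventually_lt_const (by norm_num : (0:ℝ) < 1 / 8)
    filter_upwards [h1, eventually_ge_atTop 1] with n hn hn1
    have hn0 : (0:ℝ) < n := by exact_mod_cast hn1
    have hkn8 : (k n : ℝ) < n / 8 := by
      rw [div_lt_div_iff₀ hn0 (by norm_num : (0:ℝ) < 8)] at hn; linarith
    have hk0 : (0:ℝ) ≤ (k n : ℝ) := by positivity
    have : ((4 * k n : ℕ) : ℝ) < n := by push_cast; linarith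
    exact_mod_cast this
  have hlk : ∀ n : ℕ, ∀ ℓ : ℕ, (ℓ : ℝ) ≤ (1 - δ') * k n → ℓ ≤ k n := by
    intro n ℓ h
    have hk0 : (0:ℝ) ≤ (k n : ℝ) := by positivity
    have : (ℓ : ℝ) ≤ (k n : ℝ) := by nlinarith
    exact_mod_cast this
  refine ⟨?_, ?_, ?_, ?_⟩
  · filter_upwards [h14] with n hn
    intro ℓ hℓ1 hℓ2
    exact part1_aux n (k n) ℓ (hk1 n) hn hℓ1 (hlk n ℓ hℓ2)
  · filter_upwards [h14] with n hn
    intro ℓ hℓ1 hℓ2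
    exact part2_aux n (k n) ℓ (hk1 n) hn hℓ1 hℓ2
  · filter_upwards [h14] with n hn
    intro ℓ hℓ1 hℓ2
    exact part3_aux n (k n) ℓ (hk1 n) hn hℓ1 (hlk n ℓ hℓ2)
  · filter_upwards [h14] with n hn
    exact part4_aux n (k n) (hk1 n) hn δ' hδ hδ1
end
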